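/- Assume u1 ≠ u2. Let f = (f11, f12, f22) ∈ C²_c(S²; D1). If L⁰ f (= Lf), L¹ f, and Tf all vanish identically on ℝ², then f11 ≡ f12 ≡ f22 ≡ 0. (A symmetric 2-tensor field is uniquely determined by its longitudinal V-line transform, the first moment longitudinal V-line transform, and its transverse V-line transform, provided u1 ≠ u2.) -/

import Mathlib

set_option synthInstance.maxHeartbeats 1000000
set_option maxHeartbeats 1000000


noncomputable section

open MeasureTheory

/-- The divergent beam transform `X_w h (x) = ∫₀^∞ h(x + t w) dt`. -/
def Xbeam (w : ℝ × ℝ) (h : ℝ × ℝ → ℝ) (x : ℝ × ℝ) : ℝ :=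
  ∫ t in Set.Ioi (0 : ℝ), h (x + t • w)

/-- The k-th moment divergent beam transform `X_w^k h (x) = ∫₀^∞ t^k h(x + t w) dt`. -/
def Xmom (k : ℕ) (w : ℝ × ℝ) (h : ℝ × ℝ → ℝ) (x : ℝ × ℝ) : ℝ :=
  ∫ t in Set.Ioi (0 : ℝ), t ^ k * h (x + t • w)

/-- The directional derivative `D_w h = w ⋅ ∇h`. -/
def Dir (w : ℝ × ℝ) (h : ℝ × ℝ → ℝ) (x : ℝ × ℝ) : ℝ :=
  fderiv ℝ h x w

/-- Support contained in the open unit disc `D1`. -/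
def SuppInDisc (h : ℝ × ℝ → ℝ) : Prop :=
  ∀ x : ℝ × ℝ, 1 ≤ x.1 ^ 2 + x.2 ^ 2 → h x = 0

/-- The longitudinal V-line transform. -/
def VlineL (u1 u2 : ℝ) (f11 f12 f22 : ℝ × ℝ → ℝ) : ℝ × ℝ → ℝ :=
  Xbeam (u1, u2) (fun y => u1 ^ 2 * f11 y + 2 * u1 * u2 * f12 y + u2 ^ 2 * f22 y)
    + Xbeam (-u1, u2) (fun y => u1 ^ 2 * f11 y - 2 * u1 * u2 * f12 y + u2 ^ 2 * f22 y)

/-- The transverse V-line transform. -/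
def VlineT (u1 u2 : ℝ) (f11 f12 f22 : ℝ × ℝ → ℝ) : ℝ × ℝ → ℝ :=
  Xbeam (u1, u2) (fun y => u2 ^ 2 * f11 y - 2 * u1 * u2 * f12 y + u1 ^ 2 * f22 y)
    + Xbeam (-u1, u2) (fun y => u2 ^ 2 * f11 y + 2 * u1 * u2 * f12 y + u1 ^ 2 * f22 y)

/-- The mixed V-line transform. -/
def VlineM (u1 u2 : ℝ) (f11 f12 f22 : ℝ × ℝ → ℝ) : ℝ × ℝ → ℝ :=
  Xbeam (u1, u2) (fun y => -(u1 * u2) * f11 y + (u1 ^ 2 - u2 ^ 2) * f12 y + u1 * u2 * f22 y)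
    + Xbeam (-u1, u2) (fun y => u1 * u2 * f11 y + (u1 ^ 2 - u2 ^ 2) * f12 y - u1 * u2 * f22 y)

/-- The k-th moment longitudinal V-line transform. -/
def VlineLk (k : ℕ) (u1 u2 : ℝ) (f11 f12 f22 : ℝ × ℝ → ℝ) : ℝ × ℝ → ℝ :=
  Xmom k (u1, u2) (fun y => u1 ^ 2 * f11 y + 2 * u1 * u2 * f12 y + u2 ^ 2 * f22 y)
    + Xmom k (-u1, u2) (fun y => u1 ^ 2 * f11 y - 2 * u1 * u2 * f12 y + u2 ^ 2 * f22 y)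

/-- The k-th moment transverse V-line transform. -/
def VlineTk (k : ℕ) (u1 u2 : ℝ) (f11 f12 f22 : ℝ × ℝ → ℝ) : ℝ × ℝ → ℝ :=
  Xmom k (u1, u2) (fun y => u2 ^ 2 * f11 y - 2 * u1 * u2 * f12 y + u1 ^ 2 * f22 y)
    + Xmom k (-u1, u2) (fun y => u2 ^ 2 * f11 y + 2 * u1 * u2 * f12 y + u1 ^ 2 * f22 y)

/-- The k-th moment mixed V-line transform. -/
def VlineMk (k : ℕ) (u1 u2 : ℝ) (f11 f12 f22 : ℝ × ℝ → ℝ) : ℝ × ℝ → ℝ :=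
  Xmom k (u1, u2) (fun y => -(u1 * u2) * f11 y + (u1 ^ 2 - u2 ^ 2) * f12 y + u1 * u2 * f22 y)
    + Xmom k (-u1, u2) (fun y => u1 * u2 * f11 y + (u1 ^ 2 - u2 ^ 2) * f12 y - u1 * u2 * f22 y)


open Set Filter


def Supp2 (h : ℝ × ℝ → ℝ) : Prop := ∀ x : ℝ × ℝ, 1 < x.1 ^ 2 + x.2 ^ 2 → h x = 0

lemma ray_far {w : ℝ × ℝ} (hw : w.1 ^ 2 + w.2 ^ 2 = 1) (x : ℝ × ℝ) {t : ℝ}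
    (ht : 2 * (|x.1| + |x.2|) + 4 ≤ t) :
    1 < (x + t • w).1 ^ 2 + (x + t • w).2 ^ 2 := by
  have h1 : (x + t • w).1 = x.1 + t * w.1 := rfl
  have h2 : (x + t • w).2 = x.2 + t * w.2 := rfl
  rw [h1, h2]
  have hS : (0:ℝ) ≤ |x.1| + |x.2| := by positivity
  have ht0 : (0:ℝ) ≤ t := by linarith
  have hw1 : |w.1| ≤ 1 := by nlinarith [sq_nonneg w.2, sq_abs w.1, abs_nonneg w.1]
  have hw2 : |w.2| ≤ 1 := by nlinarith [sq_nonneg w.1, sq_abs w.2, abs_nonneg w.2]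
  have hb1 : -(|x.1|) ≤ x.1 * w.1 := by
    have := neg_abs_le (x.1 * w.1)
    rw [abs_mul] at this
    nlinarith [abs_nonneg x.1]
  have hb2 : -(|x.2|) ≤ x.2 * w.2 := by
    have := neg_abs_le (x.2 * w.2)
    rw [abs_mul] at this
    nlinarith [abs_nonneg x.2]
  have hcross : t * (-(|x.1| + |x.2|)) ≤ t * (x.1 * w.1 + x.2 * w.2) :=
    mul_le_mul_of_nonneg_left (by linarith) ht0
  have hkey : t * (2 * (|x.1| + |x.2|)) ≤ t * (t - 4) :=
    mul_le_mul_of_nonneg_left (by linarith) ht0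
  have expand : (x.1 + t * w.1) ^ 2 + (x.2 + t * w.2) ^ 2
      = x.1 ^ 2 + x.2 ^ 2 + 2 * (t * (x.1 * w.1 + x.2 * w.2)) + t ^ 2 * (w.1 ^ 2 + w.2 ^ 2) := by
    ring
  rw [expand, hw]
  nlinarith [sq_nonneg x.1, sq_nonneg x.2]

lemma fderiv_supp2 {h : ℝ × ℝ → ℝ} (hs : Supp2 h) {x : ℝ × ℝ} (hx : 1 < x.1 ^ 2 + x.2 ^ 2) :
    fderiv ℝ h x = 0 := by
  have hopen : IsOpen {y : ℝ × ℝ | 1 < y.1 ^ 2 + y.2 ^ 2} :=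
    isOpen_lt continuous_const (by fun_prop)
  have hev : h =ᶠ[nhds x] (fun _ => (0:ℝ)) :=
    Filter.eventually_of_mem (hopen.mem_nhds hx) (fun y hy => hs y hy)
  rw [hev.fderiv_eq]
  exact fderiv_const_apply 0


lemma integrableOn_Ioi_of_zero_of_ge {E : Type*} [NormedAddCommGroup E] {f : ℝ → E}
    (hf : Continuous f) {R : ℝ} (hR : 0 ≤ R) (h0 : ∀ t, R ≤ t → f t = 0) :
    IntegrableOn f (Ioi (0:ℝ)) := by
  rw [← Ioc_union_Ioi_eq_Ioi hR]
  refine IntegrableOn.union ?_ ?_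
  · exact hf.integrableOn_Ioc
  · have : EqOn f (fun _ => (0:E)) (Ioi R) := fun t ht => h0 t (le_of_lt ht)
    exact (integrableOn_congr_fun this measurableSet_Ioi).mpr (integrableOn_zero)

lemma bound_fderiv {h : ℝ × ℝ → ℝ} (hC : ContDiff ℝ 1 h) (hs : Supp2 h) :
    ∃ C : ℝ, 0 ≤ C ∧ ∀ z : ℝ × ℝ, ‖fderiv ℝ h z‖ ≤ C := by
  have hcont : Continuous (fderiv ℝ h) := hC.continuous_fderiv one_ne_zero
  have hcs : HasCompactSupport (fderiv ℝ h) := by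
    apply HasCompactSupport.intro (isCompact_closedBall (0 : ℝ × ℝ) 2)
    intro z hz
    apply fderiv_supp2 hs
    simp only [Metric.mem_closedBall, dist_zero_right, not_le, Prod.norm_def] at hz
    rcases lt_max_iff.mp hz with h | h <;> rw [Real.norm_eq_abs] at h
    · nlinarith [sq_abs z.1, sq_nonneg z.2, abs_nonneg z.1]
    · nlinarith [sq_abs z.2, sq_nonneg z.1, abs_nonneg z.2]
  obtain ⟨C, hC⟩ := hcont.bounded_above_of_compact_support hcs
  exact ⟨max C 0, le_max_right _ _, fun z => (hC z).trans (le_max_left _ _)⟩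

lemma continuous_line (x w : ℝ × ℝ) : Continuous (fun t : ℝ => x + t • w) := by fun_prop

lemma hasFDerivAt_Xmom (k : ℕ) {w : ℝ × ℝ} (hw : w.1 ^ 2 + w.2 ^ 2 = 1) {h : ℝ × ℝ → ℝ}
    (hC : ContDiff ℝ 1 h) (hs : Supp2 h) (x₀ : ℝ × ℝ) :
    HasFDerivAt (Xmom k w h)
      (∫ t in Ioi (0:ℝ), t ^ k • fderiv ℝ h (x₀ + t • w)) x₀ := by
  obtain ⟨C, hC0, hCb⟩ := bound_fderiv hC hs
  set R : ℝ := 2 * (|x₀.1| + |x₀.2|) + 8 with hRdef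
  have hR0 : (0:ℝ) ≤ R := by positivity
  have hR1 : (1:ℝ) ≤ R := by
    have := abs_nonneg x₀.1; have := abs_nonneg x₀.2; simp only [hRdef]; linarith
  -- far points vanish for every x in the unit ball around x₀
  have hball : ∀ t : ℝ, R ≤ t → ∀ x ∈ Metric.ball x₀ 1,
      1 < (x + t • w).1 ^ 2 + (x + t • w).2 ^ 2 := by
    intro t ht x hx
    apply ray_far hw
    have h1 : |x.1 - x₀.1| < 1 := by
      calc |x.1 - x₀.1| ≤ ‖x - x₀‖ := by
            rw [Prod.norm_def]; exact le_max_of_le_left (le_of_eq (Real.norm_eq_abs _).symm)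
        _ < 1 := by rw [← dist_eq_norm]; exact hx
    have h2 : |x.2 - x₀.2| < 1 := by
      calc |x.2 - x₀.2| ≤ ‖x - x₀‖ := by
            rw [Prod.norm_def]; exact le_max_of_le_right (le_of_eq (Real.norm_eq_abs _).symm)
        _ < 1 := by rw [← dist_eq_norm]; exact hx
    have e1 : |x.1| ≤ |x₀.1| + 1 := by
      have := abs_sub_abs_le_abs_sub x.1 x₀.1; linarith
    have e2 : |x.2| ≤ |x₀.2| + 1 := by
      have := abs_sub_abs_le_abs_sub x.2 x₀.2; linarith
    simp only [hRdef] at ht; linarith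
  have hfar : ∀ t : ℝ, R ≤ t → ∀ x ∈ Metric.ball x₀ 1, fderiv ℝ h (x + t • w) = 0 :=
    fun t ht x hx => fderiv_supp2 hs (hball t ht x hx)
  have hfarh : ∀ t : ℝ, R ≤ t → ∀ x ∈ Metric.ball x₀ 1, h (x + t • w) = 0 :=
    fun t ht x hx => hs _ (hball t ht x hx)
  have hx₀ : x₀ ∈ Metric.ball x₀ 1 := Metric.mem_ball_self one_pos
  have hdiff : ∀ (t : ℝ) (x : ℝ × ℝ), HasFDerivAt (fun y => t ^ k * h (y + t • w))
      (t ^ k • fderiv ℝ h (x + t • w)) x := by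
    intro t x
    have h1 : HasFDerivAt (fun y : ℝ × ℝ => y + t • w) (ContinuousLinearMap.id ℝ (ℝ × ℝ)) x :=
      (hasFDerivAt_id x).add_const (t • w)
    have h2 : HasFDerivAt h (fderiv ℝ h (x + t • w)) (x + t • w) :=
      (hC.differentiable one_ne_zero _).hasFDerivAt
    have h3 := h2.comp x h1
    rw [ContinuousLinearMap.comp_id] at h3
    exact h3.const_mul (t ^ k)
  have hcfd : Continuous (fun t : ℝ => t ^ k • fderiv ℝ h (x₀ + t • w)) :=
    (continuous_pow k).smul ((hC.continuous_fderiv one_ne_zero).comp (continuous_line x₀ w))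
  refine hasFDerivAt_integral_of_dominated_of_fderiv_le
    (F' := fun x t => t ^ k • fderiv ℝ h (x + t • w))
    (bound := Set.indicator (Ioc (0:ℝ) R) (fun _ => R ^ k * C)) (Metric.ball_mem_nhds x₀ one_pos) ?_ ?_ ?_ ?_ ?_ ?_
  · refine Eventually.of_forall fun x => ?_
    exact ((continuous_pow k).mul (hC.continuous.comp (continuous_line x w))).aestronglyMeasurable
  · refine integrableOn_Ioi_of_zero_of_ge
      ((continuous_pow k).mul (hC.continuous.comp (continuous_line x₀ w))) hR0 ?_
    intro t ht
    simp [hfarh t ht x₀ hx₀]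
  · exact hcfd.aestronglyMeasurable
  · rw [ae_restrict_iff' measurableSet_Ioi]
    refine Eventually.of_forall fun t (ht : 0 < t) x hx => ?_
    by_cases htR : t ≤ R
    · rw [Set.indicator_of_mem (Set.mem_Ioc.mpr ⟨ht, htR⟩)]
      rw [norm_smul (t ^ k) (fderiv ℝ h (x + t • w))]
      have h1 : ‖t ^ k‖ ≤ R ^ k := by
        rw [Real.norm_eq_abs, abs_pow, abs_of_pos ht]
        exact pow_le_pow_left₀ ht.le htR k
      exact mul_le_mul h1 (hCb _) (norm_nonneg _) (by positivity)
    · rw [Set.indicator_of_notMem (fun hmem => htR hmem.2), hfar t (le_of_not_ge htR) x hx,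
        smul_zero, norm_zero]
  · rw [integrable_indicator_iff measurableSet_Ioc]
    refine (integrableOn_const_iff).mpr (Or.inr ?_)
    rw [Measure.restrict_apply measurableSet_Ioc]
    exact lt_of_le_of_lt (measure_mono Set.inter_subset_left) measure_Ioc_lt_top
  · exact Eventually.of_forall fun t x _ => hdiff t x

lemma contDiff_dir {g : ℝ × ℝ → ℝ} (hg : ContDiff ℝ 2 g) (y : ℝ × ℝ) :
    ContDiff ℝ 1 (Dir y g) :=
  ((hg.fderiv_right (m := 1) (by norm_num)).clm_apply contDiff_const : )

lemma continuous_dir {h : ℝ × ℝ → ℝ} (hC : ContDiff ℝ 1 h) (y : ℝ × ℝ) :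
    Continuous (Dir y h) :=
  (ContinuousLinearMap.apply ℝ ℝ y).continuous.comp (hC.continuous_fderiv one_ne_zero)

lemma supp2_dir {h : ℝ × ℝ → ℝ} (hs : Supp2 h) (y : ℝ × ℝ) : Supp2 (Dir y h) := by
  intro x hx
  unfold Dir
  rw [fderiv_supp2 hs hx]
  rfl

/-- far-vanishing along the ray, single point version -/
lemma ray_zero {w : ℝ × ℝ} (hw : w.1 ^ 2 + w.2 ^ 2 = 1) {h : ℝ × ℝ → ℝ} (hs : Supp2 h)
    (x : ℝ × ℝ) {t : ℝ} (ht : 2 * (|x.1| + |x.2|) + 4 ≤ t) : h (x + t • w) = 0 :=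
  hs _ (ray_far hw x ht)

lemma integrable_Xmom_integrand (k : ℕ) {w : ℝ × ℝ} (hw : w.1 ^ 2 + w.2 ^ 2 = 1)
    {h : ℝ × ℝ → ℝ} (hc : Continuous h) (hs : Supp2 h) (x : ℝ × ℝ) :
    IntegrableOn (fun t : ℝ => t ^ k * h (x + t • w)) (Ioi (0:ℝ)) := by
  refine integrableOn_Ioi_of_zero_of_ge ((continuous_pow k).mul (hc.comp (continuous_line x w)))
    (R := 2 * (|x.1| + |x.2|) + 4) (by positivity) ?_
  intro t ht
  simp [ray_zero hw hs x ht]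

lemma fderiv_Xmom_apply (k : ℕ) {w : ℝ × ℝ} (hw : w.1 ^ 2 + w.2 ^ 2 = 1) {h : ℝ × ℝ → ℝ}
    (hC : ContDiff ℝ 1 h) (hs : Supp2 h) (x : ℝ × ℝ) (y : ℝ × ℝ) :
    (∫ t in Ioi (0:ℝ), t ^ k • fderiv ℝ h (x + t • w)) y = Xmom k w (Dir y h) x := by
  have hint : Integrable (fun t : ℝ => t ^ k • fderiv ℝ h (x + t • w))
      (volume.restrict (Ioi (0:ℝ))) := by
    refine integrableOn_Ioi_of_zero_of_ge
      ((continuous_pow k).smul ((hC.continuous_fderiv one_ne_zero).comp (continuous_line x w)))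
      (R := 2 * (|x.1| + |x.2|) + 4) (by positivity) ?_
    intro t ht
    rw [fderiv_supp2 hs (ray_far hw x ht), smul_zero]
  rw [ContinuousLinearMap.integral_apply hint y]
  simp only [ContinuousLinearMap.coe_smul', Pi.smul_apply, smul_eq_mul]
  rfl

/-- `X_w^0 (D_w h) = -h` -/
lemma Xmom_zero_dir {w : ℝ × ℝ} (hw : w.1 ^ 2 + w.2 ^ 2 = 1) {h : ℝ × ℝ → ℝ}
    (hC : ContDiff ℝ 1 h) (hs : Supp2 h) (x : ℝ × ℝ) :
    Xmom 0 w (Dir w h) x = - h x := by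
  have hline : ∀ t : ℝ, HasDerivAt (fun s : ℝ => x + s • w) w t := by
    intro t
    simpa using ((hasDerivAt_id t).smul_const w).const_add x
  have hderiv : ∀ t ∈ Ici (0:ℝ), HasDerivAt (fun s : ℝ => h (x + s • w))
      (Dir w h (x + t • w)) t := by
    intro t _
    exact ((hC.differentiable one_ne_zero _).hasFDerivAt).comp_hasDerivAt t (hline t)
  have hint : IntegrableOn (fun t : ℝ => Dir w h (x + t • w)) (Ioi (0:ℝ)) := by
    have := integrable_Xmom_integrand 0 hw ((continuous_dir hC w)) (supp2_dir hs w) x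
    simpa using this
  have htend : Tendsto (fun t : ℝ => h (x + t • w)) atTop (nhds 0) := by
    refine Tendsto.congr' ?_ tendsto_const_nhds
    filter_upwards [eventually_ge_atTop (2 * (|x.1| + |x.2|) + 4)] with t ht
    exact (ray_zero hw hs x ht).symm
  have key := integral_Ioi_of_hasDerivAt_of_tendsto' hderiv hint htend
  have : Xmom 0 w (Dir w h) x = ∫ t in Ioi (0:ℝ), Dir w h (x + t • w) := by
    unfold Xmom; congr 1; funext t; simp
  rw [this, key]
  simp

/-- `X_w^1 (D_w h) = -X_w^0 h` -/
lemma Xmom_one_dir {w : ℝ × ℝ} (hw : w.1 ^ 2 + w.2 ^ 2 = 1) {h : ℝ × ℝ → ℝ}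
    (hC : ContDiff ℝ 1 h) (hs : Supp2 h) (x : ℝ × ℝ) :
    Xmom 1 w (Dir w h) x = - Xmom 0 w h x := by
  have hline : ∀ t : ℝ, HasDerivAt (fun s : ℝ => x + s • w) w t := by
    intro t
    simpa using ((hasDerivAt_id t).smul_const w).const_add x
  have hφ : ∀ t : ℝ, HasDerivAt (fun s : ℝ => h (x + s • w)) (Dir w h (x + t • w)) t :=
    fun t => ((hC.differentiable one_ne_zero _).hasFDerivAt).comp_hasDerivAt t (hline t)
  have hψ : ∀ t ∈ Ici (0:ℝ), HasDerivAt (fun s : ℝ => s * h (x + s • w))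
      (h (x + t • w) + t * Dir w h (x + t • w)) t := by
    intro t _
    have this : HasDerivAt (fun s : ℝ => s * h (x + s • w)) _ t := (hasDerivAt_id t).mul (hφ t)
    simpa [mul_comm] using this
  have hintA : IntegrableOn (fun t : ℝ => h (x + t • w)) (Ioi (0:ℝ)) := by
    simpa using integrable_Xmom_integrand 0 hw hC.continuous hs x
  have hintB : IntegrableOn (fun t : ℝ => t * Dir w h (x + t • w)) (Ioi (0:ℝ)) := by
    simpa using integrable_Xmom_integrand 1 hw (continuous_dir hC w) (supp2_dir hs w) x
  have htend : Tendsto (fun t : ℝ => t * h (x + t • w)) atTop (nhds 0) := by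
    refine Tendsto.congr' ?_ tendsto_const_nhds
    filter_upwards [eventually_ge_atTop (2 * (|x.1| + |x.2|) + 4)] with t ht
    rw [ray_zero hw hs x ht, mul_zero]
  have key := integral_Ioi_of_hasDerivAt_of_tendsto' hψ (hintA.add hintB) htend
  rw [integral_add hintA hintB] at key
  simp only [zero_mul, sub_zero, zero_smul, add_zero, zero_sub] at key
  have e1 : Xmom 1 w (Dir w h) x = ∫ t in Ioi (0:ℝ), t * Dir w h (x + t • w) := by
    unfold Xmom; congr 1; funext t; rw [pow_one]
  have e0 : Xmom 0 w h x = ∫ t in Ioi (0:ℝ), h (x + t • w) := by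
    unfold Xmom; congr 1; funext t; rw [pow_zero, one_mul]
  rw [e1, e0]
  linarith [key]

/-- a compactly supported function with vanishing directional derivative vanishes -/
lemma zero_of_dir_zero {h : ℝ × ℝ → ℝ} (hd : Differentiable ℝ h) (hs : Supp2 h)
    {y : ℝ × ℝ} (hy : 0 < y.1 ^ 2 + y.2 ^ 2) (hdir : ∀ z : ℝ × ℝ, fderiv ℝ h z y = 0)
    (x : ℝ × ℝ) : h x = 0 := by
  have hline : ∀ t : ℝ, HasDerivAt (fun s : ℝ => x + s • y) y t := by
    intro t
    simpa using ((hasDerivAt_id t).smul_const y).const_add x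
  have hφ : ∀ t : ℝ, HasDerivAt (fun s : ℝ => h (x + s • y)) (0:ℝ) t := by
    intro t
    have := ((hd _).hasFDerivAt).comp_hasDerivAt t (hline t)
    rwa [hdir] at this
  set n : ℝ := y.1 ^ 2 + y.2 ^ 2 with hn
  set B : ℝ := |x.1| * |y.1| + |x.2| * |y.2| with hB
  have hB0 : 0 ≤ B := by positivity
  set T : ℝ := (2 * B + 2) / n + 1 with hT
  have hTn : T * n = 2 * B + 2 + n := by
    rw [hT, add_mul, div_mul_cancel₀ _ hy.ne']; ring
  clear_value T B n
  have hT1 : 1 ≤ T := by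
    have : 0 ≤ (2 * B + 2) / n := by positivity
    linarith
  have hfarT : 1 < (x + T • y).1 ^ 2 + (x + T • y).2 ^ 2 := by
    have h1 : (x + T • y).1 = x.1 + T * y.1 := rfl
    have h2 : (x + T • y).2 = x.2 + T * y.2 := rfl
    rw [h1, h2]
    have hc1 : -(|x.1| * |y.1|) ≤ x.1 * y.1 := by
      have := neg_abs_le (x.1 * y.1); rw [abs_mul] at this; linarith
    have hc2 : -(|x.2| * |y.2|) ≤ x.2 * y.2 := by
      have := neg_abs_le (x.2 * y.2); rw [abs_mul] at this; linarith
    have hcross : T * (-(B)) ≤ T * (x.1 * y.1 + x.2 * y.2) :=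
      mul_le_mul_of_nonneg_left (by simp only [hB]; linarith) (by linarith)
    have hT2 : T ^ 2 * n = T * (2 * B + 2 + n) := by
      rw [pow_two, mul_assoc, hTn]
    have hTB : T * B ≥ B := le_mul_of_one_le_left hB0 hT1
    nlinarith [sq_nonneg x.1, sq_nonneg x.2]
  have hconst : h x = h (x + T • y) := by
    have hdiff : Differentiable ℝ (fun s : ℝ => h (x + s • y)) :=
      fun t => (hφ t).differentiableAt
    have hder0 : ∀ t : ℝ, deriv (fun s : ℝ => h (x + s • y)) t = 0 :=
      fun t => (hφ t).deriv
    have := is_const_of_deriv_eq_zero hdiff hder0 0 T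
    simpa using this
  rw [hconst]
  exact hs _ hfarT

/-- if a sum of two moment transforms vanishes identically, so does its directional derivative,
which is again a sum of moment transforms. -/
lemma step_sum (k : ℕ) {w₁ w₂ : ℝ × ℝ} (hw₁ : w₁.1 ^ 2 + w₁.2 ^ 2 = 1)
    (hw₂ : w₂.1 ^ 2 + w₂.2 ^ 2 = 1) {h₁ h₂ : ℝ × ℝ → ℝ}
    (hC₁ : ContDiff ℝ 1 h₁) (hC₂ : ContDiff ℝ 1 h₂) (hs₁ : Supp2 h₁) (hs₂ : Supp2 h₂)
    (hzero : ∀ z, Xmom k w₁ h₁ z + Xmom k w₂ h₂ z = 0) (y z : ℝ × ℝ) :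
    Xmom k w₁ (Dir y h₁) z + Xmom k w₂ (Dir y h₂) z = 0 := by
  have D₁ := hasFDerivAt_Xmom k hw₁ hC₁ hs₁ z
  have D₂ := hasFDerivAt_Xmom k hw₂ hC₂ hs₂ z
  have hsum := D₁.add D₂
  have heq : (Xmom k w₁ h₁ + Xmom k w₂ h₂) = fun _ => (0:ℝ) := funext hzero
  rw [heq] at hsum
  have hz : ((∫ t in Ioi (0:ℝ), t ^ k • fderiv ℝ h₁ (z + t • w₁))
      + (∫ t in Ioi (0:ℝ), t ^ k • fderiv ℝ h₂ (z + t • w₂))) = 0 :=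
    hsum.unique (hasFDerivAt_const 0 z)
  have happ := congrArg (fun L : (ℝ × ℝ) →L[ℝ] ℝ => L y) hz
  simp only [ContinuousLinearMap.add_apply, ContinuousLinearMap.zero_apply] at happ
  rwa [fderiv_Xmom_apply k hw₁ hC₁ hs₁ z y, fderiv_Xmom_apply k hw₂ hC₂ hs₂ z y] at happ

/-- if a moment transform equals a function `g`, its directional derivative equals that of `g`. -/
lemma step_eq (k : ℕ) {w : ℝ × ℝ} (hw : w.1 ^ 2 + w.2 ^ 2 = 1) {h : ℝ × ℝ → ℝ}
    (hC : ContDiff ℝ 1 h) (hs : Supp2 h) {g : ℝ × ℝ → ℝ}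
    (heq : ∀ z, Xmom k w h z = g z) (y z : ℝ × ℝ) :
    Xmom k w (Dir y h) z = fderiv ℝ g z y := by
  have D := hasFDerivAt_Xmom k hw hC hs z
  have heq' : Xmom k w h = g := funext heq
  rw [heq'] at D
  rw [← fderiv_Xmom_apply k hw hC hs z y, D.fderiv]

lemma fderiv_comb3 (a b c : ℝ) {f g k : ℝ × ℝ → ℝ} (hf : Differentiable ℝ f)
    (hg : Differentiable ℝ g) (hk : Differentiable ℝ k) (z : ℝ × ℝ) :
    fderiv ℝ (fun y => a * f y + b * g y + c * k y) z
      = a • fderiv ℝ f z + b • fderiv ℝ g z + c • fderiv ℝ k z :=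
  ((((hf z).hasFDerivAt.const_mul a).add ((hg z).hasFDerivAt.const_mul b)).add
    ((hk z).hasFDerivAt.const_mul c)).fderiv

lemma fderiv_comb3' (a b c : ℝ) {f g k : ℝ × ℝ → ℝ} (hf : Differentiable ℝ f)
    (hg : Differentiable ℝ g) (hk : Differentiable ℝ k) (z : ℝ × ℝ) :
    fderiv ℝ (fun y => a * f y - b * g y + c * k y) z
      = a • fderiv ℝ f z - b • fderiv ℝ g z + c • fderiv ℝ k z :=
  ((((hf z).hasFDerivAt.const_mul a).sub ((hg z).hasFDerivAt.const_mul b)).add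
    ((hk z).hasFDerivAt.const_mul c)).fderiv

lemma fderiv_comb2 (a c : ℝ) {f k : ℝ × ℝ → ℝ} (hf : Differentiable ℝ f)
    (hk : Differentiable ℝ k) (z : ℝ × ℝ) :
    fderiv ℝ (fun y => a * f y + c * k y) z = a • fderiv ℝ f z + c • fderiv ℝ k z :=
  (((hf z).hasFDerivAt.const_mul a).add ((hk z).hasFDerivAt.const_mul c)).fderiv

lemma Xmom_zero_eq (w : ℝ × ℝ) (h : ℝ × ℝ → ℝ) (x : ℝ × ℝ) :
    Xmom 0 w h x = Xbeam w h x := by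
  unfold Xmom Xbeam; simp


/-- for `u1 ≠ u2`, a symmetric 2-tensor field is uniquely determined
by `Lf`, `L¹f`, and `Tf`. -/
theorem injectivity_L_L1_T
    (u1 u2 : ℝ) (hu : u1 ^ 2 + u2 ^ 2 = 1) (hu1 : 0 < u1) (hu2 : 0 < u2)
    (hne : u1 ≠ u2)
    (f11 f12 f22 : ℝ × ℝ → ℝ)
    (h11 : ContDiff ℝ 2 f11) (h12 : ContDiff ℝ 2 f12) (h22 : ContDiff ℝ 2 f22)
    (s11 : SuppInDisc f11) (s12 : SuppInDisc f12) (s22 : SuppInDisc f22)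
    (hL0 : ∀ x : ℝ × ℝ, VlineLk 0 u1 u2 f11 f12 f22 x = 0)
    (hL1 : ∀ x : ℝ × ℝ, VlineLk 1 u1 u2 f11 f12 f22 x = 0)
    (hT : ∀ x : ℝ × ℝ, VlineT u1 u2 f11 f12 f22 x = 0) :
    ∀ x : ℝ × ℝ, f11 x = 0 ∧ f12 x = 0 ∧ f22 x = 0 := by
  -- basic objects
  set u : ℝ × ℝ := (u1, u2) with hu_def
  set v : ℝ × ℝ := (-u1, u2) with hv_def
  have hu' : u.1 ^ 2 + u.2 ^ 2 = 1 := by show u1 ^ 2 + u2 ^ 2 = 1; exact hu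
  have hv' : v.1 ^ 2 + v.2 ^ 2 = 1 := by show (-u1) ^ 2 + u2 ^ 2 = 1; rw [neg_sq]; exact hu
  -- differentiability and support of components
  have d11 : Differentiable ℝ f11 := h11.differentiable (by norm_num)
  have d12 : Differentiable ℝ f12 := h12.differentiable (by norm_num)
  have d22 : Differentiable ℝ f22 := h22.differentiable (by norm_num)
  have s11' : Supp2 f11 := fun z hz => s11 z hz.le
  have s12' : Supp2 f12 := fun z hz => s12 z hz.le
  have s22' : Supp2 f22 := fun z hz => s22 z hz.le
  -- the four scalar combinations
  set gu : ℝ × ℝ → ℝ := fun y => u1 ^ 2 * f11 y + 2 * u1 * u2 * f12 y + u2 ^ 2 * f22 y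
    with hgu_def
  set gv : ℝ × ℝ → ℝ := fun y => u1 ^ 2 * f11 y - 2 * u1 * u2 * f12 y + u2 ^ 2 * f22 y
    with hgv_def
  set tu : ℝ × ℝ → ℝ := fun y => u2 ^ 2 * f11 y - 2 * u1 * u2 * f12 y + u1 ^ 2 * f22 y
    with htu_def
  set tv : ℝ × ℝ → ℝ := fun y => u2 ^ 2 * f11 y + 2 * u1 * u2 * f12 y + u1 ^ 2 * f22 y
    with htv_def
  have hgu2 : ContDiff ℝ 2 gu :=
    ((contDiff_const.mul h11).add (contDiff_const.mul h12)).add (contDiff_const.mul h22)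
  have hgv2 : ContDiff ℝ 2 gv :=
    ((contDiff_const.mul h11).sub (contDiff_const.mul h12)).add (contDiff_const.mul h22)
  have htu2 : ContDiff ℝ 2 tu :=
    ((contDiff_const.mul h11).sub (contDiff_const.mul h12)).add (contDiff_const.mul h22)
  have htv2 : ContDiff ℝ 2 tv :=
    ((contDiff_const.mul h11).add (contDiff_const.mul h12)).add (contDiff_const.mul h22)
  have hguC : ContDiff ℝ 1 gu := hgu2.of_le (by norm_num)
  have hgvC : ContDiff ℝ 1 gv := hgv2.of_le (by norm_num)
  have htuC : ContDiff ℝ 1 tu := htu2.of_le (by norm_num)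
  have htvC : ContDiff ℝ 1 tv := htv2.of_le (by norm_num)
  have hgus : Supp2 gu := fun z hz => by
    simp only [hgu_def]; rw [s11 z hz.le, s12 z hz.le, s22 z hz.le]; ring
  have hgvs : Supp2 gv := fun z hz => by
    simp only [hgv_def]; rw [s11 z hz.le, s12 z hz.le, s22 z hz.le]; ring
  have htus : Supp2 tu := fun z hz => by
    simp only [htu_def]; rw [s11 z hz.le, s12 z hz.le, s22 z hz.le]; ring
  have htvs : Supp2 tv := fun z hz => by
    simp only [htv_def]; rw [s11 z hz.le, s12 z hz.le, s22 z hz.le]; ring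
  -- rewriting the hypotheses
  have hL0' : ∀ z, Xmom 0 u gu z + Xmom 0 v gv z = 0 := fun z => hL0 z
  have hL1' : ∀ z, Xmom 1 u gu z + Xmom 1 v gv z = 0 := fun z => hL1 z
  have hT' : ∀ z, Xmom 0 u tu z + Xmom 0 v tv z = 0 := fun z => by
    rw [Xmom_zero_eq, Xmom_zero_eq]; exact hT z
  -- E1 : X_u (D_v gu) = gv
  have E1 : ∀ z, Xmom 0 u (Dir v gu) z = gv z := by
    intro z
    have h1 := step_sum 0 hu' hv' hguC hgvC hgus hgvs hL0' v z
    have h2 := Xmom_zero_dir hv' hgvC hgvs z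
    linarith
  -- E2 : X_v (D_u gv) = gu
  have E2 : ∀ z, Xmom 0 v (Dir u gv) z = gu z := by
    intro z
    have h1 := step_sum 0 hu' hv' hguC hgvC hgus hgvs hL0' u z
    have h2 := Xmom_zero_dir hu' hguC hgus z
    linarith
  -- E3 : D_v gu + D_u gv = 0
  have E3 : ∀ z, fderiv ℝ gu z v + fderiv ℝ gv z u = 0 := by
    intro z
    have h1 := step_eq 0 hu' (contDiff_dir hgu2 v) (supp2_dir hgus v) E1 u z
    have h2 := Xmom_zero_dir hu' (contDiff_dir hgu2 v) (supp2_dir hgus v) z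
    have h3 : -(Dir v gu z) = fderiv ℝ gv z u := by rw [← h2, h1]
    unfold Dir at h3
    linarith
  -- E4 : X_v^1 (D_u gv) = X_u^0 gu
  have E4 : ∀ z, Xmom 1 v (Dir u gv) z = Xmom 0 u gu z := by
    intro z
    have h1 := step_sum 1 hu' hv' hguC hgvC hgus hgvs hL1' u z
    have h2 := Xmom_one_dir hu' hguC hgus z
    linarith
  -- E5 : gu + gv = 0
  have E5 : ∀ z, gu z + gv z = 0 := by
    intro z
    have h1 := step_eq 1 hv' (contDiff_dir hgv2 u) (supp2_dir hgvs u) E4 v z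
    have h2 := Xmom_one_dir hv' (contDiff_dir hgv2 u) (supp2_dir hgvs u) z
    have h3 := E2 z
    have h4 : fderiv ℝ (Xmom 0 u gu) z v = Xmom 0 u (Dir v gu) z := by
      rw [(hasFDerivAt_Xmom 0 hu' hguC hgus z).fderiv, fderiv_Xmom_apply 0 hu' hguC hgus z v]
    have h5 := E1 z
    -- h1 : Xmom 1 v (Dir v (Dir u gv)) z = fderiv (Xmom 0 u gu) z v
    -- h2 : Xmom 1 v (Dir v (Dir u gv)) z = - Xmom 0 v (Dir u gv) z
    rw [h2, h4, h5] at h1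
    linarith
  -- E6 : X_v (D_u tv) = tu
  have E6 : ∀ z, Xmom 0 v (Dir u tv) z = tu z := by
    intro z
    have h1 := step_sum 0 hu' hv' htuC htvC htus htvs hT' u z
    have h2 := Xmom_zero_dir hu' htuC htus z
    linarith
  -- E7 : D_v tu + D_u tv = 0
  have E7 : ∀ z, fderiv ℝ tu z v + fderiv ℝ tv z u = 0 := by
    intro z
    have h1 := step_eq 0 hv' (contDiff_dir htv2 u) (supp2_dir htvs u) E6 v z
    have h2 := Xmom_zero_dir hv' (contDiff_dir htv2 u) (supp2_dir htvs u) z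
    have h3 : -(Dir u tv z) = fderiv ℝ tu z v := by rw [← h2, h1]
    unfold Dir at h3
    linarith
  -- P1 : u1² f11 + u2² f22 = 0
  have P1 : ∀ z, u1 ^ 2 * f11 z + u2 ^ 2 * f22 z = 0 := by
    intro z
    have := E5 z
    simp only [hgu_def, hgv_def] at this
    linarith
  -- fderiv of the vanishing combination is zero
  have hpc : ∀ z, u1 ^ 2 • fderiv ℝ f11 z + u2 ^ 2 • fderiv ℝ f22 z = 0 := by
    intro z
    have h1 : (fun y => u1 ^ 2 * f11 y + u2 ^ 2 * f22 y) = fun _ => (0:ℝ) := funext P1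
    have h2 := fderiv_comb2 (u1 ^ 2) (u2 ^ 2) d11 d22 z
    rw [h1] at h2
    rw [← h2, fderiv_const_apply 0]
  -- f12 has vanishing derivative in direction (v - u)
  have hB : ∀ z, fderiv ℝ f12 z (v - u) = 0 := by
    intro z
    have h3 := E3 z
    rw [hgu_def, hgv_def, fderiv_comb3 (u1 ^ 2) (2 * u1 * u2) (u2 ^ 2) d11 d12 d22 z,
      fderiv_comb3' (u1 ^ 2) (2 * u1 * u2) (u2 ^ 2) d11 d12 d22 z] at h3
    have hpv := congrArg (fun L : (ℝ × ℝ) →L[ℝ] ℝ => L v) (hpc z)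
    have hpu := congrArg (fun L : (ℝ × ℝ) →L[ℝ] ℝ => L u) (hpc z)
    simp only [ContinuousLinearMap.add_apply, ContinuousLinearMap.sub_apply,
      ContinuousLinearMap.smul_apply, ContinuousLinearMap.zero_apply, smul_eq_mul] at h3 hpv hpu
    rw [map_sub]
    have hb : (2 : ℝ) * u1 * u2 ≠ 0 := by positivity
    have : 2 * u1 * u2 * (fderiv ℝ f12 z v - fderiv ℝ f12 z u) = 0 := by linarith
    exact (mul_eq_zero.mp this).resolve_left hb
  -- f12 = 0
  have hf12 : ∀ z, f12 z = 0 := by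
    intro z
    refine zero_of_dir_zero d12 s12' (y := v - u) ?_ hB z
    have h1 : (v - u).1 = -u1 - u1 := rfl
    have h2 : (v - u).2 = u2 - u2 := rfl
    rw [h1, h2]
    nlinarith
  have hBzero : ∀ z, fderiv ℝ f12 z = 0 := by
    intro z
    have : f12 = fun _ => (0:ℝ) := funext hf12
    rw [this, fderiv_const_apply 0]
  -- q := u2² f11 + u1² f22 has vanishing derivative in direction (u + v)
  have hQdir : ∀ z, fderiv ℝ (fun y => u2 ^ 2 * f11 y + u1 ^ 2 * f22 y) z (u + v) = 0 := by
    intro z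
    have h3 := E7 z
    rw [htu_def, htv_def, fderiv_comb3' (u2 ^ 2) (2 * u1 * u2) (u1 ^ 2) d11 d12 d22 z,
      fderiv_comb3 (u2 ^ 2) (2 * u1 * u2) (u1 ^ 2) d11 d12 d22 z] at h3
    rw [fderiv_comb2 (u2 ^ 2) (u1 ^ 2) d11 d22 z]
    simp only [hBzero z, ContinuousLinearMap.add_apply, ContinuousLinearMap.sub_apply,
      ContinuousLinearMap.smul_apply, ContinuousLinearMap.zero_apply, smul_eq_mul,
      mul_zero, sub_zero, add_zero] at h3 ⊢
    rw [map_add, map_add]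
    linarith
  have hQ : ∀ z, u2 ^ 2 * f11 z + u1 ^ 2 * f22 z = 0 := by
    intro z
    refine zero_of_dir_zero ?_ ?_ (y := u + v) ?_ hQdir z
    · exact fun p => ((d11 p).const_mul _).add ((d22 p).const_mul _)
    · intro p hp
      show u2 ^ 2 * f11 p + u1 ^ 2 * f22 p = 0
      rw [s11 p hp.le, s22 p hp.le]; ring
    · have h1 : (u + v).1 = u1 + -u1 := rfl
      have h2 : (u + v).2 = u2 + u2 := rfl
      rw [h1, h2]
      nlinarith
  -- final linear algebra
  intro x
  have h1 := P1 x
  have h2 := hQ x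
  have h3 : (u1 ^ 2 + u2 ^ 2) * (f11 x + f22 x) = 0 := by linear_combination h1 + h2
  rw [hu, one_mul] at h3
  have h4 : (u1 ^ 2 - u2 ^ 2) * (f11 x - f22 x) = 0 := by linear_combination h1 - h2
  have hac : u1 ^ 2 - u2 ^ 2 ≠ 0 := by
    intro hcon
    exact hne (by nlinarith)
  have h5 : f11 x - f22 x = 0 := (mul_eq_zero.mp h4).resolve_left hac
  exact ⟨by linarith, hf12 x, by linarith⟩
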